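/- arXiv:1306.4524 — 2 statements merged into one kernel-verified Lean document; each statement's English description precedes it below -/
import Mathlib

section
/- Let F1, F2 ∈ ℤ_p[X1, X2] and a0, b0 ∈ ℤ_p with Δ0 = (∂F1/∂X1 ∂F2/∂X2 − ∂F2/∂X1 ∂F1/∂X2)(a0,b0) ≠ 0 and max{|F1(a0,b0)|_p, |F2(a0,b0)|_p} < |Δ0|_p². Then there exists a unique pair (a,b) ∈ ℤ_p × ℤ_p with F1(a,b) = F2(a,b) = 0 and max{|a−a0|_p, |b−b0|_p} ≤ p^{−1}|Δ0|_p. -/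
open MvPolynomial

variable {p : ℕ} [Fact p.Prime]

private lemma normL (c h : Fin 2 → ℤ_[p]) (M : ℝ) (hM : ∀ i, ‖h i‖ ≤ M) :
    ‖∑ i, c i * h i‖ ≤ M := by
  have h0 : (0:ℝ) ≤ M := le_trans (norm_nonneg _) (hM 0)
  rw [Fin.sum_univ_two]
  refine le_trans (PadicInt.nonarchimedean _ _) (max_le ?_ ?_) <;>
  · rw [norm_mul]
    exact le_trans (mul_le_mul (PadicInt.norm_le_one _) (hM _) (norm_nonneg _) zero_le_one)
      (by simpa using hM _)

private lemma taylor2 (G : MvPolynomial (Fin 2) ℤ_[p]) (x h : Fin 2 → ℤ_[p]) :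
    ‖eval (fun i => x i + h i) G - eval x G - ∑ i, eval x (pderiv i G) * h i‖
      ≤ (max ‖h 0‖ ‖h 1‖) ^ 2 := by
  set M : ℝ := max ‖h 0‖ ‖h 1‖ with hMdef
  have hM : ∀ i, ‖h i‖ ≤ M := by
    intro i; fin_cases i
    · exact le_max_left _ _
    · show ‖h 1‖ ≤ M; exact le_max_right _ _
  have hM0 : (0:ℝ) ≤ M := le_trans (norm_nonneg _) (hM 0)
  have hM1 : M ≤ 1 := max_le (PadicInt.norm_le_one _) (PadicInt.norm_le_one _)
  induction G using MvPolynomial.induction_on with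
  | C a => simp [hM0, sq_nonneg]
  | add q r hq hr =>
      have : eval (fun i => x i + h i) (q + r) - eval x (q + r)
          - ∑ i, eval x (pderiv i (q + r)) * h i
          = (eval (fun i => x i + h i) q - eval x q - ∑ i, eval x (pderiv i q) * h i)
            + (eval (fun i => x i + h i) r - eval x r - ∑ i, eval x (pderiv i r) * h i) := by
        simp [Finset.sum_add_distrib, add_mul]; ring
      rw [this]
      exact le_trans (PadicInt.nonarchimedean _ _) (max_le hq hr)
  | mul_X q j hq =>
      have key : eval (fun i => x i + h i) (q * X j) - eval x (q * X j)
          - ∑ i, eval x (pderiv i (q * X j)) * h i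
          = x j * (eval (fun i => x i + h i) q - eval x q - ∑ i, eval x (pderiv i q) * h i)
            + h j * ((eval (fun i => x i + h i) q - eval x q
                - ∑ i, eval x (pderiv i q) * h i) + ∑ i, eval x (pderiv i q) * h i) := by
        have hsum : ∑ i, eval x (pderiv i (q * X j)) * h i
            = (∑ i, eval x (pderiv i q) * h i) * x j + eval x q * h j := by
          have : ∀ i : Fin 2, eval x (pderiv i (q * X j)) * h i
              = eval x (pderiv i q) * h i * x j
                + eval x q * (if j = i then 1 else 0) * h i := by
            intro i
            by_cases hji : j = i <;>
              simp [pderiv_mul, pderiv_X, Pi.single_apply, hji] <;> ring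
          rw [Finset.sum_congr rfl fun i _ => this i, Finset.sum_add_distrib,
            ← Finset.sum_mul]
          congr 1
          rw [Fin.sum_univ_two]
          fin_cases j <;> simp
        rw [hsum]
        simp only [eval_mul, eval_X]
        ring
      rw [key]
      have hLq : ‖∑ i, eval x (pderiv i q) * h i‖ ≤ M := normL _ _ _ hM
      refine le_trans (PadicInt.nonarchimedean _ _) (max_le ?_ ?_)
      · rw [norm_mul]
        exact le_trans (mul_le_mul (PadicInt.norm_le_one _) hq (norm_nonneg _) zero_le_one)
          (by simp)
      · rw [norm_mul]
        have h2 : ‖(eval (fun i => x i + h i) q - eval x q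
            - ∑ i, eval x (pderiv i q) * h i) + ∑ i, eval x (pderiv i q) * h i‖ ≤ M :=
          le_trans (PadicInt.nonarchimedean _ _)
            (max_le (le_trans hq (by nlinarith)) hLq)
        calc ‖h j‖ * ‖_ + _‖ ≤ M * M := mul_le_mul (hM j) h2 (norm_nonneg _) hM0
        _ = M ^ 2 := (sq M).symm

private lemma lip (G : MvPolynomial (Fin 2) ℤ_[p]) (x h : Fin 2 → ℤ_[p]) :
    ‖eval (fun i => x i + h i) G - eval x G‖ ≤ max ‖h 0‖ ‖h 1‖ := by
  set M : ℝ := max ‖h 0‖ ‖h 1‖ with hMdef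
  have hM : ∀ i, ‖h i‖ ≤ M := by
    intro i; fin_cases i
    · exact le_max_left _ _
    · show ‖h 1‖ ≤ M; exact le_max_right _ _
  have hM0 : (0:ℝ) ≤ M := le_trans (norm_nonneg _) (hM 0)
  have hM1 : M ≤ 1 := max_le (PadicInt.norm_le_one _) (PadicInt.norm_le_one _)
  have key : eval (fun i => x i + h i) G - eval x G
      = (eval (fun i => x i + h i) G - eval x G - ∑ i, eval x (pderiv i G) * h i)
        + ∑ i, eval x (pderiv i G) * h i := by ring
  rw [key]
  refine le_trans (PadicInt.nonarchimedean _ _) (max_le ?_ (normL _ _ _ hM))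
  exact le_trans (taylor2 G x h) (by nlinarith)

private lemma div_ex (a b : ℤ_[p]) (hb : b ≠ 0) (hle : ‖a‖ ≤ ‖b‖) :
    ∃ c : ℤ_[p], b * c = a ∧ ‖b‖ * ‖c‖ = ‖a‖ := by
  have hbq : (b : ℚ_[p]) ≠ 0 := by
    simpa using (PadicInt.coe_eq_zero (x := b)).not.mpr hb
  have hbpos : (0:ℝ) < ‖(b:ℚ_[p])‖ := norm_pos_iff.mpr hbq
  have hno : ‖(a:ℚ_[p]) / (b:ℚ_[p])‖ ≤ 1 := by
    rw [norm_div, div_le_one hbpos]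
    exact_mod_cast hle
  refine ⟨⟨(a:ℚ_[p]) / (b:ℚ_[p]), hno⟩, ?_, ?_⟩
  · apply Subtype.ext
    show (b:ℚ_[p]) * ((a:ℚ_[p]) / (b:ℚ_[p])) = (a:ℚ_[p])
    field_simp
  · show ‖b‖ * ‖(a:ℚ_[p]) / (b:ℚ_[p])‖ = ‖a‖
    rw [norm_div, PadicInt.norm_def, PadicInt.norm_def]
    rw [mul_comm]
    exact div_mul_cancel₀ _ (ne_of_gt hbpos)

private lemma nonarch_sub (a b : ℤ_[p]) : ‖a - b‖ ≤ max ‖a‖ ‖b‖ := by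
  rw [sub_eq_add_neg]
  simpa using PadicInt.nonarchimedean a (-b)

private lemma gap (z w : ℤ_[p]) (hw : w ≠ 0) (h : ‖z‖ < ‖w‖ ^ 2) :
    ‖z‖ ≤ (p:ℝ)⁻¹ * ‖w‖ ^ 2 := by
  have hp : (1:ℝ) < p := by exact_mod_cast (Fact.out : p.Prime).one_lt
  have hp0 : (p:ℝ) ≠ 0 := by positivity
  have hv : ‖w‖ ^ 2 = (p:ℝ) ^ (-(2 * (w.valuation : ℤ))) := by
    rw [PadicInt.norm_eq_zpow_neg_valuation hw, sq, ← zpow_add₀ hp0]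
    ring_nf
  have key := (PadicInt.norm_le_pow_iff_norm_lt_pow_add_one z
      (-(2 * (w.valuation : ℤ)) - 1)).mpr (by rw [sub_add_cancel, ← hv]; exact h)
  calc ‖z‖ ≤ (p:ℝ) ^ (-(2 * (w.valuation : ℤ)) - 1) := key
  _ = (p:ℝ)⁻¹ * ‖w‖ ^ 2 := by
      rw [zpow_sub_one₀ hp0, hv]; ring

private lemma norm_eval_eq (G : MvPolynomial (Fin 2) ℤ_[p]) (x0 x : Fin 2 → ℤ_[p])
    (hx : ∀ i, ‖x i - x0 i‖ < ‖eval x0 G‖) : ‖eval x G‖ = ‖eval x0 G‖ := by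
  have e1 : (fun i => x0 i + (x i - x0 i)) = x := by funext i; ring
  have hlip := lip G x0 (fun i => x i - x0 i)
  rw [e1] at hlip
  have hdiff : ‖eval x G - eval x0 G‖ < ‖eval x0 G‖ :=
    lt_of_le_of_lt hlip (max_lt (hx 0) (hx 1))
  have hx' : eval x G = eval x0 G + (eval x G - eval x0 G) := by ring
  rw [hx', PadicInt.norm_add_eq_max_of_ne (ne_of_lt hdiff).symm]
  exact max_eq_left (le_of_lt hdiff)

private lemma newton_step (F1 F2 : MvPolynomial (Fin 2) ℤ_[p]) (x : Fin 2 → ℤ_[p]) (δ t : ℝ)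
    (hδpos : 0 < δ)
    (hΔx : ‖eval x (pderiv 0 F1 * pderiv 1 F2 - pderiv 0 F2 * pderiv 1 F1)‖ = δ)
    (ht : t ≤ δ)
    (h1 : ‖eval x F1‖ ≤ t) (h2 : ‖eval x F2‖ ≤ t) :
    ∃ x' : Fin 2 → ℤ_[p], (∀ i, ‖x' i - x i‖ ≤ t / δ) ∧
      ‖eval x' F1‖ ≤ (t / δ) ^ 2 ∧ ‖eval x' F2‖ ≤ (t / δ) ^ 2 := by
  set A := eval x (pderiv 0 F1) with hA
  set B := eval x (pderiv 1 F1) with hB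
  set C := eval x (pderiv 0 F2) with hC
  set E := eval x (pderiv 1 F2) with hE
  set f1 := eval x F1 with hf1
  set f2 := eval x F2 with hf2
  set Δ := eval x (pderiv 0 F1 * pderiv 1 F2 - pderiv 0 F2 * pderiv 1 F1) with hΔdef
  have hΔ : Δ = A * E - C * B := by rw [hΔdef]; simp [hA, hB, hC, hE]
  have hΔne : Δ ≠ 0 := by
    intro h0; rw [h0] at hΔx; simp at hΔx; exact ne_of_gt hδpos hΔx.symm
  have ht0 : (0:ℝ) ≤ t := le_trans (norm_nonneg f1) h1
  have hnum : ∀ u v w z : ℤ_[p], ‖u‖ ≤ t → ‖w‖ ≤ t → ‖u * v - w * z‖ ≤ t := by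
    intro u v w z hu hw
    refine le_trans (nonarch_sub _ _) (max_le ?_ ?_) <;>
      rw [norm_mul] <;>
      exact le_trans (mul_le_mul (by assumption) (PadicInt.norm_le_one _)
        (norm_nonneg _) ht0) (by simpa)
  have hle0 : ‖f2 * B - f1 * E‖ ≤ ‖Δ‖ := by
    rw [hΔx]; exact le_trans (hnum _ _ _ _ h2 h1) ht
  have hle1 : ‖f1 * C - f2 * A‖ ≤ ‖Δ‖ := by
    rw [hΔx]; exact le_trans (hnum _ _ _ _ h1 h2) ht
  obtain ⟨h0, hh0, hn0⟩ := div_ex (f2 * B - f1 * E) Δ hΔne hle0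
  obtain ⟨h1c, hh1, hn1⟩ := div_ex (f1 * C - f2 * A) Δ hΔne hle1
  have hbound : ∀ (c : ℤ_[p]), ‖Δ‖ * ‖c‖ ≤ t → ‖c‖ ≤ t / δ := by
    intro c hc
    rw [le_div_iff₀ hδpos, mul_comm, ← hΔx]
    exact hc
  have hb0 : ‖h0‖ ≤ t / δ := hbound h0 (hn0.trans_le (hnum _ _ _ _ h2 h1))
  have hb1 : ‖h1c‖ ≤ t / δ := hbound h1c (hn1.trans_le (hnum _ _ _ _ h1 h2))
  set h : Fin 2 → ℤ_[p] := fun i => if i = 0 then h0 else h1c with hh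
  have hhe0 : h 0 = h0 := by simp [hh]
  have hhe1 : h 1 = h1c := by simp [hh]
  have hMle : max ‖h 0‖ ‖h 1‖ ≤ t / δ := by
    rw [hhe0, hhe1]; exact max_le hb0 hb1
  have htd0 : (0:ℝ) ≤ t / δ := div_nonneg ht0 (le_of_lt hδpos)
  refine ⟨fun i => x i + h i, ?_, ?_, ?_⟩
  · intro i
    have : x i + h i - x i = h i := by ring
    rw [this]
    fin_cases i
    · show ‖h 0‖ ≤ t / δ; rw [hhe0]; exact hb0
    · show ‖h 1‖ ≤ t / δ; rw [hhe1]; exact hb1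
  · have hL : ∑ i, eval x (pderiv i F1) * h i = -f1 := by
      rw [Fin.sum_univ_two, hhe0, hhe1]
      apply mul_left_cancel₀ hΔne
      show Δ * (A * h0 + B * h1c) = Δ * (-f1)
      linear_combination A * hh0 + B * hh1 + f1 * hΔ
    have := taylor2 F1 x h
    rw [hL, ← hf1] at this
    have e2 : eval (fun i => x i + h i) F1 - f1 - (-f1) = eval (fun i => x i + h i) F1 := by
      ring
    rw [e2] at this
    exact le_trans this (pow_le_pow_left₀ (le_trans (norm_nonneg _) (le_max_left _ ‖h 1‖)) hMle 2)
  · have hL : ∑ i, eval x (pderiv i F2) * h i = -f2 := by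
      rw [Fin.sum_univ_two, hhe0, hhe1]
      apply mul_left_cancel₀ hΔne
      show Δ * (C * h0 + E * h1c) = Δ * (-f2)
      linear_combination C * hh0 + E * hh1 + f2 * hΔ
    have := taylor2 F2 x h
    rw [hL, ← hf2] at this
    have e2 : eval (fun i => x i + h i) F2 - f2 - (-f2) = eval (fun i => x i + h i) F2 := by
      ring
    rw [e2] at this
    exact le_trans this (pow_le_pow_left₀ (le_trans (norm_nonneg _) (le_max_left _ ‖h 1‖)) hMle 2)

private lemma rigid (F1 F2 : MvPolynomial (Fin 2) ℤ_[p]) (x0 x y : Fin 2 → ℤ_[p]) (δ : ℝ)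
    (hδpos : 0 < δ)
    (hΔ0 : ‖eval x0 (pderiv 0 F1 * pderiv 1 F2 - pderiv 0 F2 * pderiv 1 F1)‖ = δ)
    (hx : ∀ i, ‖x i - x0 i‖ ≤ (p:ℝ)⁻¹ * δ) (hy : ∀ i, ‖y i - x0 i‖ ≤ (p:ℝ)⁻¹ * δ)
    (hx1 : eval x F1 = 0) (hx2 : eval x F2 = 0)
    (hy1 : eval y F1 = 0) (hy2 : eval y F2 = 0) : x = y := by
  have hp1 : (1:ℝ) < p := by exact_mod_cast (Fact.out : p.Prime).one_lt
  have hpinv : (p:ℝ)⁻¹ < 1 := by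
    rw [inv_lt_one_iff₀]; right; exact hp1
  have hpinv0 : (0:ℝ) < (p:ℝ)⁻¹ := by positivity
  have hlt : (p:ℝ)⁻¹ * δ < δ := by nlinarith
  have hΔx : ‖eval x (pderiv 0 F1 * pderiv 1 F2 - pderiv 0 F2 * pderiv 1 F1)‖ = δ := by
    rw [← hΔ0]
    exact norm_eval_eq _ x0 x (fun i => lt_of_le_of_lt (hx i) (by rw [hΔ0]; exact hlt))
  obtain ⟨h, hhdef⟩ : ∃ h : Fin 2 → ℤ_[p], h = fun i => y i - x i := ⟨_, rfl⟩
  have hyx : (fun i => x i + h i) = y := by funext i; rw [hhdef]; ring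
  have hhi : ∀ i, ‖h i‖ ≤ (p:ℝ)⁻¹ * δ := by
    intro i
    have e : h i = (y i - x0 i) - (x i - x0 i) := by rw [hhdef]; ring
    rw [e]
    exact le_trans (nonarch_sub _ _) (max_le (hy i) (hx i))
  obtain ⟨M, hMdef⟩ : ∃ M : ℝ, M = max ‖h 0‖ ‖h 1‖ := ⟨_, rfl⟩
  have hM : M ≤ (p:ℝ)⁻¹ * δ := by rw [hMdef]; exact max_le (hhi 0) (hhi 1)
  have hM0 : (0:ℝ) ≤ M := by
    rw [hMdef]; exact le_trans (norm_nonneg _) (le_max_left _ _)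
  obtain ⟨L1, hL1⟩ : ∃ L1 : ℤ_[p], L1 = ∑ i, eval x (pderiv i F1) * h i := ⟨_, rfl⟩
  obtain ⟨L2, hL2⟩ : ∃ L2 : ℤ_[p], L2 = ∑ i, eval x (pderiv i F2) * h i := ⟨_, rfl⟩
  have hL1n : ‖L1‖ ≤ M ^ 2 := by
    have t := taylor2 F1 x h
    rw [hyx, hy1, hx1, ← hL1, ← hMdef] at t
    have e : (0:ℤ_[p]) - 0 - L1 = -L1 := by ring
    rw [e, norm_neg] at t
    exact t
  have hL2n : ‖L2‖ ≤ M ^ 2 := by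
    have t := taylor2 F2 x h
    rw [hyx, hy2, hx2, ← hL2, ← hMdef] at t
    have e : (0:ℤ_[p]) - 0 - L2 = -L2 := by ring
    rw [e, norm_neg] at t
    exact t
  have key : ∀ i, δ * ‖h i‖ ≤ M ^ 2 := by
    have c0 : eval x (pderiv 0 F1 * pderiv 1 F2 - pderiv 0 F2 * pderiv 1 F1) * h 0
        = eval x (pderiv 1 F2) * L1 - eval x (pderiv 1 F1) * L2 := by
      rw [hL1, hL2]
      simp only [Fin.sum_univ_two, map_sub, map_mul]
      ring
    have c1 : eval x (pderiv 0 F1 * pderiv 1 F2 - pderiv 0 F2 * pderiv 1 F1) * h 1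
        = eval x (pderiv 0 F1) * L2 - eval x (pderiv 0 F2) * L1 := by
      rw [hL1, hL2]
      simp only [Fin.sum_univ_two, map_sub, map_mul]
      ring
    have bnd : ∀ a b : ℤ_[p], ‖a‖ ≤ M ^ 2 → ‖b‖ ≤ M ^ 2 →
        ∀ u v : ℤ_[p], ‖u * a - v * b‖ ≤ M ^ 2 := by
      intro a b ha hb u v
      have hM2 : (0:ℝ) ≤ M ^ 2 := by positivity
      refine le_trans (nonarch_sub _ _) (max_le ?_ ?_) <;> rw [norm_mul]
      · exact le_trans (mul_le_mul (PadicInt.norm_le_one _) ha (norm_nonneg _) zero_le_one)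
          (by simp)
      · exact le_trans (mul_le_mul (PadicInt.norm_le_one _) hb (norm_nonneg _) zero_le_one)
          (by simp)
    intro i
    fin_cases i
    · show δ * ‖h 0‖ ≤ M ^ 2
      calc δ * ‖h 0‖
          = ‖eval x (pderiv 0 F1 * pderiv 1 F2 - pderiv 0 F2 * pderiv 1 F1) * h 0‖ := by
            rw [norm_mul, hΔx]
      _ ≤ M ^ 2 := by rw [c0]; exact bnd _ _ hL1n hL2n _ _
    · show δ * ‖h 1‖ ≤ M ^ 2
      calc δ * ‖h 1‖
          = ‖eval x (pderiv 0 F1 * pderiv 1 F2 - pderiv 0 F2 * pderiv 1 F1) * h 1‖ := by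
            rw [norm_mul, hΔx]
      _ ≤ M ^ 2 := by rw [c1]; exact bnd _ _ hL2n hL1n _ _
  have hMz : M = 0 := by
    by_contra hMne
    have hMpos : 0 < M := lt_of_le_of_ne hM0 (Ne.symm hMne)
    have hdM : δ * M ≤ M ^ 2 := by
      rcases le_total ‖h 0‖ ‖h 1‖ with hcmp | hcmp
      · have e : M = ‖h 1‖ := by rw [hMdef]; exact max_eq_right hcmp
        have t := key 1; rw [← e] at t; exact t
      · have e : M = ‖h 0‖ := by rw [hMdef]; exact max_eq_left hcmp
        have t := key 0; rw [← e] at t; exact t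
    nlinarith
  funext i
  have hn : ‖h i‖ = 0 := by
    refine le_antisymm ?_ (norm_nonneg _)
    calc ‖h i‖ ≤ M := by
          rw [hMdef]
          fin_cases i
          · exact le_max_left _ _
          · show ‖h 1‖ ≤ max ‖h 0‖ ‖h 1‖; exact le_max_right _ _
    _ = 0 := hMz
  have hz : h i = 0 := norm_eq_zero.mp hn
  rw [hhdef] at hz
  have hz2 : y i - x i = 0 := hz
  exact (sub_eq_zero.mp hz2).symm

private lemma exist (F1 F2 : MvPolynomial (Fin 2) ℤ_[p]) (x0 : Fin 2 → ℤ_[p]) (δ : ℝ)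
    (hδpos : 0 < δ)
    (hΔ0 : ‖eval x0 (pderiv 0 F1 * pderiv 1 F2 - pderiv 0 F2 * pderiv 1 F1)‖ = δ)
    (hf1 : ‖eval x0 F1‖ ≤ (p:ℝ)⁻¹ * δ ^ 2) (hf2 : ‖eval x0 F2‖ ≤ (p:ℝ)⁻¹ * δ ^ 2) :
    ∃ x : Fin 2 → ℤ_[p], eval x F1 = 0 ∧ eval x F2 = 0 ∧
      ∀ i, ‖x i - x0 i‖ ≤ (p:ℝ)⁻¹ * δ := by
  have hp1 : (1:ℝ) < p := by exact_mod_cast (Fact.out : p.Prime).one_lt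
  obtain ⟨q, hqdef⟩ : ∃ q : ℝ, q = (p:ℝ)⁻¹ := ⟨_, rfl⟩
  have hq0 : 0 < q := by rw [hqdef]; positivity
  have hq1 : q < 1 := by rw [hqdef, inv_lt_one_iff₀]; right; exact hp1
  have hδ1 : δ ≤ 1 := by rw [← hΔ0]; exact PadicInt.norm_le_one _
  obtain ⟨P, hPdef⟩ : ∃ P : ℕ → (Fin 2 → ℤ_[p]) → Prop,
      P = fun n x => (∀ i, ‖x i - x0 i‖ ≤ q * δ) ∧
        ‖eval x F1‖ ≤ δ ^ 2 * q ^ (n + 1) ∧ ‖eval x F2‖ ≤ δ ^ 2 * q ^ (n + 1) := ⟨_, rfl⟩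
  have base : P 0 x0 := by
    rw [hPdef]
    refine ⟨fun i => by simp [sub_self]; positivity, ?_, ?_⟩ <;>
      · rw [pow_one, mul_comm, hqdef]; assumption
  have step : ∀ n (x : Fin 2 → ℤ_[p]), P n x →
      ∃ x', P (n + 1) x' ∧ ∀ i, ‖x' i - x i‖ ≤ δ * q ^ (n + 1) := by
    intro n x hx
    rw [hPdef] at hx
    obtain ⟨hclose, h1, h2⟩ := hx
    have hqpow : q ^ (n + 1) ≤ 1 := pow_le_one₀ (le_of_lt hq0) (le_of_lt hq1)
    have hqd : q * δ < δ := by nlinarith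
    have hΔx : ‖eval x (pderiv 0 F1 * pderiv 1 F2 - pderiv 0 F2 * pderiv 1 F1)‖ = δ := by
      rw [← hΔ0]
      exact norm_eval_eq _ x0 x
        (fun i => lt_of_le_of_lt (hclose i) (by rw [hΔ0]; exact hqd))
    have ht : δ ^ 2 * q ^ (n + 1) ≤ δ := by nlinarith
    obtain ⟨x', hmove, h1', h2'⟩ :=
      newton_step F1 F2 x δ (δ ^ 2 * q ^ (n + 1)) hδpos hΔx ht h1 h2
    have hdiv : δ ^ 2 * q ^ (n + 1) / δ = δ * q ^ (n + 1) := by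
      field_simp
    have hsq : (δ ^ 2 * q ^ (n + 1) / δ) ^ 2 ≤ δ ^ 2 * q ^ (n + 2) := by
      rw [hdiv]
      have : (δ * q ^ (n + 1)) ^ 2 = δ ^ 2 * (q ^ (n + 2) * (q ^ n * 1)) := by ring
      rw [this]
      have h1q : q ^ n * 1 ≤ 1 := by
        rw [mul_one]; exact pow_le_one₀ (le_of_lt hq0) (le_of_lt hq1)
      nlinarith [pow_pos hq0 (n+2), pow_pos hq0 n, pow_nonneg (le_of_lt hq0) (n+2)]
    refine ⟨x', ?_, fun i => by rw [← hdiv]; exact hmove i⟩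
    rw [hPdef]
    refine ⟨?_, le_trans h1' hsq, le_trans h2' hsq⟩
    intro i
    have e : x' i - x0 i = (x' i - x i) + (x i - x0 i) := by ring
    rw [e]
    refine le_trans (PadicInt.nonarchimedean _ _) (max_le ?_ (hclose i))
    have := hmove i
    rw [hdiv] at this
    refine le_trans this ?_
    calc δ * q ^ (n + 1) ≤ δ * q ^ 1 :=
          mul_le_mul_of_nonneg_left
            (pow_le_pow_of_le_one (le_of_lt hq0) (le_of_lt hq1) (by omega))
            (le_of_lt hδpos)
    _ = q * δ := by ring
  choose f hf1' hf2' using step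
  obtain ⟨seq, hseq0, hseqS⟩ : ∃ seq : ∀ _ : ℕ, {x : Fin 2 → ℤ_[p] // P _ x},
      (seq 0).1 = x0 ∧ ∀ n, (seq (n+1)).1 = f n (seq n).1 (seq n).2 := by
    refine ⟨fun n => Nat.rec ⟨x0, base⟩ (fun m prev => ⟨f m prev.1 prev.2, hf1' m prev.1 prev.2⟩) n, rfl, fun n => rfl⟩
  have hmoves : ∀ n i, ‖(seq (n+1)).1 i - (seq n).1 i‖ ≤ δ * q ^ (n + 1) := by
    intro n i
    rw [hseqS n]
    exact hf2' n (seq n).1 (seq n).2 i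
  have hcauchy : ∀ i, CauchySeq (fun n => (seq n).1 i) := by
    intro i
    apply cauchySeq_of_le_geometric q (δ * q) hq1
    intro n
    rw [dist_eq_norm, norm_sub_rev]
    calc ‖(seq (n+1)).1 i - (seq n).1 i‖ ≤ δ * q ^ (n + 1) := hmoves n i
    _ = δ * q * q ^ n := by ring
  have hexlim : ∀ i, ∃ a, Filter.Tendsto (fun n => (seq n).1 i) Filter.atTop (nhds a) :=
    fun i => cauchySeq_tendsto_of_complete (hcauchy i)
  choose xa hxa using hexlim
  have hfull : Filter.Tendsto (fun n => (seq n).1) Filter.atTop (nhds xa) :=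
    tendsto_pi_nhds.mpr hxa
  have hPiff : ∀ n (x : Fin 2 → ℤ_[p]), P n x ↔ ((∀ i, ‖x i - x0 i‖ ≤ q * δ) ∧
      ‖eval x F1‖ ≤ δ ^ 2 * q ^ (n + 1) ∧ ‖eval x F2‖ ≤ δ ^ 2 * q ^ (n + 1)) := by
    intro n x; rw [hPdef]
  have hzero : ∀ (G : MvPolynomial (Fin 2) ℤ_[p]),
      (∀ n, ‖eval ((seq n).1) G‖ ≤ δ ^ 2 * q ^ (n + 1)) → eval xa G = 0 := by
    intro G hG
    have hlim : Filter.Tendsto (fun n => eval ((seq n).1) G) Filter.atTop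
        (nhds (eval xa G)) :=
      ((MvPolynomial.continuous_eval G).tendsto xa).comp hfull
    have hlim0 : Filter.Tendsto (fun n => eval ((seq n).1) G) Filter.atTop (nhds 0) := by
      refine squeeze_zero_norm (f := fun n => eval ((seq n).1) G)
          (a := fun n => (δ ^ 2 * q) * q ^ n) ?_ ?_
      · intro n
        calc ‖eval ((seq n).1) G‖ ≤ δ ^ 2 * q ^ (n + 1) := hG n
        _ = (δ ^ 2 * q) * q ^ n := by ring
      · have := (tendsto_pow_atTop_nhds_zero_of_lt_one (le_of_lt hq0) hq1).const_mul
          (δ ^ 2 * q)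
        simpa using this
    exact tendsto_nhds_unique hlim hlim0
  refine ⟨xa, hzero F1 (fun n => ((hPiff n _).mp (seq n).2).2.1),
    hzero F2 (fun n => ((hPiff n _).mp (seq n).2).2.2), ?_⟩
  intro i
  have hnlim : Filter.Tendsto (fun n => ‖(seq n).1 i - x0 i‖) Filter.atTop
      (nhds ‖xa i - x0 i‖) :=
    ((hxa i).sub tendsto_const_nhds).norm
  have hres := le_of_tendsto' hnlim
    (fun n => ((hPiff n _).mp (seq n).2).1 i)
  rw [hqdef] at hres
  exact hres

theorem stmt_13 (p : ℕ) [Fact p.Prime]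
    (F1 F2 : MvPolynomial (Fin 2) ℤ_[p]) (a0 b0 : ℤ_[p])
    (Δ0 : ℤ_[p])
    (hΔ0 : Δ0 = MvPolynomial.eval (fun i : Fin 2 => if i = 0 then a0 else b0)
      (pderiv 0 F1 * pderiv 1 F2 - pderiv 0 F2 * pderiv 1 F1))
    (hΔ0ne : Δ0 ≠ 0)
    (hfar : max ‖MvPolynomial.eval (fun i : Fin 2 => if i = 0 then a0 else b0) F1‖
        ‖MvPolynomial.eval (fun i : Fin 2 => if i = 0 then a0 else b0) F2‖ < ‖Δ0‖ ^ 2) :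
    ∃! ab : ℤ_[p] × ℤ_[p],
      MvPolynomial.eval (fun i : Fin 2 => if i = 0 then ab.1 else ab.2) F1 = 0 ∧
      MvPolynomial.eval (fun i : Fin 2 => if i = 0 then ab.1 else ab.2) F2 = 0 ∧
      max ‖ab.1 - a0‖ ‖ab.2 - b0‖ ≤ (p : ℝ)⁻¹ * ‖Δ0‖ := by
  obtain ⟨x0, hx0⟩ : ∃ x0 : Fin 2 → ℤ_[p], x0 = fun i => if i = 0 then a0 else b0 := ⟨_, rfl⟩
  have hx00 : x0 0 = a0 := by rw [hx0]; norm_num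
  have hx01 : x0 1 = b0 := by rw [hx0]; norm_num
  rw [← hx0] at hΔ0 hfar
  have hδpos : 0 < ‖Δ0‖ := norm_pos_iff.mpr hΔ0ne
  have hΔ0' : ‖eval x0 (pderiv 0 F1 * pderiv 1 F2 - pderiv 0 F2 * pderiv 1 F1)‖ = ‖Δ0‖ := by
    rw [← hΔ0]
  have hg1 : ‖eval x0 F1‖ ≤ (p:ℝ)⁻¹ * ‖Δ0‖ ^ 2 :=
    gap _ Δ0 hΔ0ne (lt_of_le_of_lt (le_max_left _ _) hfar)
  have hg2 : ‖eval x0 F2‖ ≤ (p:ℝ)⁻¹ * ‖Δ0‖ ^ 2 :=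
    gap _ Δ0 hΔ0ne (lt_of_le_of_lt (le_max_right _ _) hfar)
  obtain ⟨x, hx1, hx2, hxc⟩ := exist F1 F2 x0 ‖Δ0‖ hδpos hΔ0' hg1 hg2
  have hxfun : (fun i : Fin 2 => if i = 0 then x 0 else x 1) = x := by
    funext i
    fin_cases i <;> simp
  refine ⟨(x 0, x 1), ⟨?_, ?_, ?_⟩, ?_⟩
  · show eval (fun i : Fin 2 => if i = 0 then x 0 else x 1) F1 = 0
    rw [hxfun]; exact hx1
  · show eval (fun i : Fin 2 => if i = 0 then x 0 else x 1) F2 = 0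
    rw [hxfun]; exact hx2
  · show max ‖x 0 - a0‖ ‖x 1 - b0‖ ≤ (p : ℝ)⁻¹ * ‖Δ0‖
    rw [← hx00, ← hx01]
    exact max_le (hxc 0) (hxc 1)
  · rintro ⟨a, b⟩ ⟨h1, h2, h3⟩
    obtain ⟨y, hy⟩ : ∃ y : Fin 2 → ℤ_[p], y = fun i => if i = 0 then a else b := ⟨_, rfl⟩
    have hy0 : y 0 = a := by rw [hy]; norm_num
    have hy1 : y 1 = b := by rw [hy]; norm_num
    rw [← hy] at h1 h2
    have hyc : ∀ i, ‖y i - x0 i‖ ≤ (p:ℝ)⁻¹ * ‖Δ0‖ := by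
      intro i
      fin_cases i
      · show ‖y 0 - x0 0‖ ≤ _
        rw [hy0, hx00]
        exact le_trans (le_max_left _ ‖b - b0‖) h3
      · show ‖y 1 - x0 1‖ ≤ _
        rw [hy1, hx01]
        exact le_trans (le_max_right ‖a - a0‖ _) h3
    have hxy : x = y := rigid F1 F2 x0 x y ‖Δ0‖ hδpos hΔ0' hxc hyc hx1 hx2 h1 h2
    have : (a, b) = (y 0, y 1) := by rw [hy0, hy1]
    rw [this, ← hxy]
end

section
/- For every l1 ∈ ℤ≥0 and l2 ∈ ℤ≥0, the Lebesgue measure of the set {x ∈ ℝ³ : |x1 + x2 + x3 − l1| ≤ 1/2 and |x1² + x2² + x3² − l2| ≤ 1/2} is bounded by an absolute constant independent of l1 and l2. -/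
open MeasureTheory Set
open scoped ENNReal NNReal

private lemma pi_coe' : (NNReal.pi : ENNReal) = ENNReal.ofReal Real.pi := by
  rw [← NNReal.coe_real_pi, ENNReal.ofReal_coe_nnreal]

private lemma shear_mp' {α : Type*} [MeasureSpace α] [SigmaFinite (volume : Measure α)]
    {h : α → ℝ} (hm : Measurable h) :
    MeasurePreserving (fun p : ℝ × α => (p.1 + h p.2, p.2)) volume volume := by
  have h1 : MeasurePreserving (fun q : α × ℝ => (q.1, q.2 + h q.1))
      ((volume : Measure α).prod (volume : Measure ℝ)) (volume.prod volume) :=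
    (MeasurePreserving.id volume).skew_product
      (g := fun a t => t + h a)
      (measurable_snd.add (hm.comp measurable_fst))
      (Filter.Eventually.of_forall fun a => map_add_right_eq_self volume (h a))
  have h2 : MeasurePreserving (Prod.swap : ℝ × α → α × ℝ)
      ((volume : Measure ℝ).prod volume) ((volume : Measure α).prod volume) :=
    Measure.measurePreserving_swap
  have h3 : MeasurePreserving (Prod.swap : α × ℝ → ℝ × α)
      ((volume : Measure α).prod volume) ((volume : Measure ℝ).prod volume) :=
    Measure.measurePreserving_swap
  exact (h3.comp h1).comp h2

private lemma annulus_bound' (c : ℝ) :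
    volume {q : ℝ × ℝ | c ≤ q.1 ^ 2 + q.2 ^ 2 ∧ q.1 ^ 2 + q.2 ^ 2 ≤ c + 1} ≤
      ENNReal.ofReal Real.pi := by
  have hS : MeasurableSet {q : ℝ × ℝ | c ≤ q.1 ^ 2 + q.2 ^ 2 ∧ q.1 ^ 2 + q.2 ^ 2 ≤ c + 1} := by
    have hm : Measurable fun q : ℝ × ℝ => q.1 ^ 2 + q.2 ^ 2 := by fun_prop
    exact (measurableSet_le measurable_const hm).inter (measurableSet_le hm measurable_const)
  have hmp := Complex.volume_preserving_equiv_real_prod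
  rw [← hmp.measure_preimage hS.nullMeasurableSet]
  have hsub : Complex.measurableEquivRealProd ⁻¹'
      {q : ℝ × ℝ | c ≤ q.1 ^ 2 + q.2 ^ 2 ∧ q.1 ^ 2 + q.2 ^ 2 ≤ c + 1} ⊆
      Metric.closedBall (0:ℂ) (Real.sqrt (c+1)) \ Metric.ball (0:ℂ) (Real.sqrt c) := by
    intro z hz
    simp only [mem_preimage, Complex.measurableEquivRealProd_apply, mem_setOf_eq] at hz
    have hn : ‖z‖ ^ 2 = z.re ^ 2 + z.im ^ 2 := by
      rw [Complex.sq_norm, Complex.normSq_apply]; ring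
    constructor
    · rw [Metric.mem_closedBall, dist_zero_right]
      have h2 : ‖z‖ ^ 2 ≤ c + 1 := by rw [hn]; exact hz.2
      nlinarith [Real.sq_sqrt (show (0:ℝ) ≤ c+1 by
          nlinarith [sq_nonneg z.re, sq_nonneg z.im, hz.1, hz.2]),
        Real.sqrt_nonneg (c+1), norm_nonneg z]
    · rw [Metric.mem_ball, dist_zero_right, not_lt]
      have h1 : c ≤ ‖z‖ ^ 2 := by rw [hn]; exact hz.1
      calc Real.sqrt c ≤ Real.sqrt (‖z‖^2) := Real.sqrt_le_sqrt h1
        _ = ‖z‖ := Real.sqrt_sq (norm_nonneg z)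
  refine (measure_mono hsub).trans ?_
  by_cases hc : 0 ≤ c
  · rw [measure_diff (Metric.ball_subset_closedBall.trans
        (Metric.closedBall_subset_closedBall (Real.sqrt_le_sqrt (by linarith))))
        measurableSet_ball.nullMeasurableSet
        (by rw [Complex.volume_ball]
            exact ENNReal.mul_ne_top (ENNReal.pow_ne_top ENNReal.ofReal_ne_top)
              ENNReal.coe_ne_top)]
    rw [Complex.volume_closedBall, Complex.volume_ball]
    rw [← ENNReal.ofReal_pow (Real.sqrt_nonneg _), ← ENNReal.ofReal_pow (Real.sqrt_nonneg _),
      Real.sq_sqrt (by linarith), Real.sq_sqrt hc]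
    rw [tsub_le_iff_right, pi_coe']
    rw [show (c+1:ℝ) = 1 + c by ring, ENNReal.ofReal_add zero_le_one hc,
      ENNReal.ofReal_one, add_mul, one_mul, add_comm]
  · refine (measure_mono diff_subset).trans ?_
    rw [Complex.volume_closedBall]
    have h1 : (ENNReal.ofReal (Real.sqrt (c+1))) ^ 2 ≤ 1 := by
      have hle : Real.sqrt (c+1) ≤ 1 := Real.sqrt_le_one.mpr (by linarith)
      calc (ENNReal.ofReal (Real.sqrt (c+1))) ^ 2 ≤ 1 ^ 2 :=
            pow_le_pow_left' (by simpa using ENNReal.ofReal_le_ofReal hle) 2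
        _ = 1 := one_pow 2
    calc (ENNReal.ofReal (Real.sqrt (c+1))) ^ 2 * NNReal.pi ≤ 1 * NNReal.pi :=
          mul_le_mul_left h1 _
      _ = ENNReal.ofReal Real.pi := by rw [one_mul, pi_coe']

private lemma smul_prod_smul' (c d : ℝ≥0∞) (hd : d ≠ ⊤) (μ ν : Measure ℝ)
    [SFinite μ] [SFinite ν] :
    (c • μ).prod (d • ν) = (c * d) • (μ.prod ν) := by
  ext s hs
  rw [Measure.smul_apply, Measure.prod_apply hs, Measure.prod_apply hs,
    lintegral_smul_measure]
  simp_rw [Measure.smul_apply, smul_eq_mul]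
  rw [lintegral_const_mul' _ _ hd, ← mul_assoc]

private lemma slice_bound' (s L : ℝ) :
    volume {p : ℝ × ℝ | |(s - p.1 - p.2) ^ 2 + p.1 ^ 2 + p.2 ^ 2 - L| ≤ 1/2} ≤
      ENNReal.ofReal Real.pi := by
  have hmA : MeasurableSet {q : ℝ × ℝ | |2*q.1^2 + (3/2)*q.2^2 + s^2/3 - L| ≤ 1/2} := by
    have : Measurable fun q : ℝ × ℝ => |2*q.1^2 + (3/2)*q.2^2 + s^2/3 - L| := by fun_prop
    exact measurableSet_le this measurable_const
  have hmA2 : MeasurableSet {q : ℝ × ℝ | |q.1^2 + q.2^2 + s^2/3 - L| ≤ 1/2} := by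
    have : Measurable fun q : ℝ × ℝ => |q.1^2 + q.2^2 + s^2/3 - L| := by fun_prop
    exact measurableSet_le this measurable_const
  have hσa : MeasurePreserving (fun p : ℝ × ℝ => (p.1 + (p.2 - s)/2, p.2)) volume volume :=
    shear_mp' (h := fun z : ℝ => (z - s)/2) (by fun_prop)
  have hσb : MeasurePreserving (fun q : ℝ × ℝ => (q.1, q.2 + -(s/3))) volume volume := by
    rw [Measure.volume_eq_prod]
    exact (MeasurePreserving.id volume).prod (measurePreserving_add_right volume (-(s/3)))
  have hσ := hσb.comp hσa
  have hset : {p : ℝ × ℝ | |(s - p.1 - p.2) ^ 2 + p.1 ^ 2 + p.2 ^ 2 - L| ≤ 1/2} =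
      ((fun q : ℝ × ℝ => (q.1, q.2 + -(s/3))) ∘ (fun p : ℝ × ℝ => (p.1 + (p.2 - s)/2, p.2))) ⁻¹'
      {q : ℝ × ℝ | |2*q.1^2 + (3/2)*q.2^2 + s^2/3 - L| ≤ 1/2} := by
    ext p
    simp only [mem_preimage, Function.comp_apply, mem_setOf_eq]
    rw [show (2*(p.1 + (p.2 - s)/2)^2 + (3/2)*(p.2 + -(s/3))^2 + s^2/3 : ℝ)
        = (s - p.1 - p.2)^2 + p.1^2 + p.2^2 from by ring]
  rw [hset, hσ.measure_preimage hmA.nullMeasurableSet]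
  have h2 : (0:ℝ) < Real.sqrt 2 := Real.sqrt_pos.mpr (by norm_num)
  have h32 : (0:ℝ) < Real.sqrt (3/2) := Real.sqrt_pos.mpr (by norm_num)
  have hset2 : {q : ℝ × ℝ | |2*q.1^2 + (3/2)*q.2^2 + s^2/3 - L| ≤ 1/2} =
      (Prod.map (fun t : ℝ => Real.sqrt 2 * t) (fun t : ℝ => Real.sqrt (3/2) * t)) ⁻¹'
      {q : ℝ × ℝ | |q.1^2 + q.2^2 + s^2/3 - L| ≤ 1/2} := by
    ext p
    simp only [mem_preimage, Prod.map_fst, Prod.map_snd, mem_setOf_eq]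
    rw [mul_pow, mul_pow, Real.sq_sqrt (by norm_num : (0:ℝ) ≤ 2),
      Real.sq_sqrt (by norm_num : (0:ℝ) ≤ 3/2)]
  rw [hset2]
  have hmap : Measurable (Prod.map (fun t : ℝ => Real.sqrt 2 * t)
      (fun t : ℝ => Real.sqrt (3/2) * t)) := by fun_prop
  rw [← Measure.map_apply hmap hmA2]
  rw [Measure.volume_eq_prod, ← Measure.map_prod_map _ _ (by fun_prop) (by fun_prop),
    Real.map_volume_mul_left (ne_of_gt h2), Real.map_volume_mul_left (ne_of_gt h32),
    smul_prod_smul' _ _ ENNReal.ofReal_ne_top, Measure.smul_apply, smul_eq_mul]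
  have hfac : ENNReal.ofReal |(Real.sqrt 2)⁻¹| * ENNReal.ofReal |(Real.sqrt (3/2))⁻¹| ≤ 1 := by
    have a1 : |(Real.sqrt 2)⁻¹| ≤ 1 := by
      rw [abs_of_nonneg (by positivity), inv_le_one_iff₀]
      right
      nlinarith [Real.sq_sqrt (show (0:ℝ) ≤ 2 by norm_num), Real.sqrt_nonneg 2]
    have a2 : |(Real.sqrt (3/2))⁻¹| ≤ 1 := by
      rw [abs_of_nonneg (by positivity), inv_le_one_iff₀]
      right
      nlinarith [Real.sq_sqrt (show (0:ℝ) ≤ 3/2 by norm_num), Real.sqrt_nonneg (3/2)]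
    calc ENNReal.ofReal |(Real.sqrt 2)⁻¹| * ENNReal.ofReal |(Real.sqrt (3/2))⁻¹| ≤ 1 * 1 :=
        mul_le_mul' (by simpa using ENNReal.ofReal_le_ofReal a1)
          (by simpa using ENNReal.ofReal_le_ofReal a2)
      _ = 1 := one_mul 1
  calc ENNReal.ofReal |(Real.sqrt 2)⁻¹| * ENNReal.ofReal |(Real.sqrt (3/2))⁻¹| *
        (volume.prod volume) {q : ℝ × ℝ | |q.1^2 + q.2^2 + s^2/3 - L| ≤ 1/2}
      ≤ 1 * (volume.prod volume) {q : ℝ × ℝ | |q.1^2 + q.2^2 + s^2/3 - L| ≤ 1/2} :=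
        mul_le_mul_left hfac _
    _ = volume {q : ℝ × ℝ | |q.1^2 + q.2^2 + s^2/3 - L| ≤ 1/2} := by
        rw [one_mul, ← Measure.volume_eq_prod]
    _ ≤ ENNReal.ofReal Real.pi := by
        have hsub : {q : ℝ × ℝ | |q.1^2 + q.2^2 + s^2/3 - L| ≤ 1/2} ⊆
            {q : ℝ × ℝ | (L - s^2/3 - 1/2) ≤ q.1 ^ 2 + q.2 ^ 2 ∧
              q.1 ^ 2 + q.2 ^ 2 ≤ (L - s^2/3 - 1/2) + 1} := by
          intro q hq
          simp only [mem_setOf_eq] at hq ⊢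
          rw [abs_le] at hq
          constructor <;> linarith [hq.1, hq.2]
        exact (measure_mono hsub).trans (annulus_bound' _)

theorem stmt_17 :
    ∃ C : ℝ, 0 < C ∧ ∀ l1 l2 : ℕ,
      volume {x : ℝ × ℝ × ℝ |
        |x.1 + x.2.1 + x.2.2 - (l1 : ℝ)| ≤ 1/2 ∧
        |x.1 ^ 2 + x.2.1 ^ 2 + x.2.2 ^ 2 - (l2 : ℝ)| ≤ 1/2} ≤ ENNReal.ofReal C := by
  refine ⟨Real.pi, Real.pi_pos, fun l1 l2 => ?_⟩
  set T : Set (ℝ × ℝ × ℝ) := {p : ℝ × ℝ × ℝ | |p.1 - (l1:ℝ)| ≤ 1/2 ∧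
    |(p.1 - p.2.1 - p.2.2)^2 + p.2.1^2 + p.2.2^2 - (l2:ℝ)| ≤ 1/2} with hT_def
  have hT : MeasurableSet T := by
    have h1 : Measurable fun p : ℝ × ℝ × ℝ => |p.1 - (l1:ℝ)| := by fun_prop
    have h2 : Measurable fun p : ℝ × ℝ × ℝ =>
        |(p.1 - p.2.1 - p.2.2)^2 + p.2.1^2 + p.2.2^2 - (l2:ℝ)| := by fun_prop
    exact (measurableSet_le h1 measurable_const).inter (measurableSet_le h2 measurable_const)
  have hφ : MeasurePreserving
      (fun x : ℝ × ℝ × ℝ => (x.1 + (x.2.1 + x.2.2), x.2)) volume volume :=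
    shear_mp' (h := fun a : ℝ × ℝ => a.1 + a.2) (by fun_prop)
  have hset : {x : ℝ × ℝ × ℝ |
        |x.1 + x.2.1 + x.2.2 - (l1 : ℝ)| ≤ 1/2 ∧
        |x.1 ^ 2 + x.2.1 ^ 2 + x.2.2 ^ 2 - (l2 : ℝ)| ≤ 1/2} =
      (fun x : ℝ × ℝ × ℝ => (x.1 + (x.2.1 + x.2.2), x.2)) ⁻¹' T := by
    ext x
    simp only [hT_def, mem_preimage, mem_setOf_eq]
    rw [show (x.1 + (x.2.1 + x.2.2) - x.2.1 - x.2.2 : ℝ)^2 + x.2.1^2 + x.2.2^2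
        = x.1^2 + x.2.1^2 + x.2.2^2 from by ring,
      show (x.1 + (x.2.1 + x.2.2) : ℝ) = x.1 + x.2.1 + x.2.2 from by ring]
  rw [hset, hφ.measure_preimage hT.nullMeasurableSet]
  have hTprod : volume T = ∫⁻ s, volume (Prod.mk s ⁻¹' T) := by
    rw [Measure.volume_eq_prod, Measure.prod_apply hT]
  rw [hTprod]
  have hbound : ∀ s : ℝ, volume (Prod.mk s ⁻¹' T) ≤
      Set.indicator (Icc ((l1:ℝ) - 1/2) ((l1:ℝ) + 1/2))
        (fun _ => ENNReal.ofReal Real.pi) s := by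
    intro s
    by_cases hs : |s - (l1:ℝ)| ≤ 1/2
    · rw [Set.indicator_of_mem (by rw [mem_Icc]; rw [abs_le] at hs; constructor <;> linarith)]
      refine (measure_mono ?_).trans (slice_bound' s (l2:ℝ))
      intro p hp
      exact hp.2
    · have hempty : Prod.mk s ⁻¹' T = ∅ := by
        ext p
        simp only [mem_preimage, hT_def, mem_setOf_eq, mem_empty_iff_false, iff_false]
        intro hp
        exact hs hp.1
      rw [hempty]
      simp
  calc ∫⁻ s, volume (Prod.mk s ⁻¹' T) ≤
      ∫⁻ s, Set.indicator (Icc ((l1:ℝ) - 1/2) ((l1:ℝ) + 1/2))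
        (fun _ => ENNReal.ofReal Real.pi) s := lintegral_mono hbound
    _ = ENNReal.ofReal Real.pi * volume (Icc ((l1:ℝ) - 1/2) ((l1:ℝ) + 1/2)) := by
        rw [lintegral_indicator_const measurableSet_Icc]
    _ = ENNReal.ofReal Real.pi := by
        rw [Real.volume_Icc, show ((l1:ℝ) + 1/2 - ((l1:ℝ) - 1/2)) = 1 by ring,
          ENNReal.ofReal_one, mul_one]
end
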